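/- Let (X,μ,𝓡) be a discrete p.m.p. equivalence relation and 𝓕 a regular Borel family of finite subset functions with regularity constant C_reg. Then for every f ∈ L¹(X,μ) and every t > 0, μ({x : M[f|𝓕](x) > t}) ≤ C_reg‖f‖₁/t, where M[f|𝓕] = sup_r A[|f| | 𝓕_r] is the maximal function of the averaging operators A[f|𝓕_r](x) = |𝓕_r(x)|⁻¹ ∑_{y∈𝓕_r(x)} f(y). -/

import Mathlib

open MeasureTheory Finset
open scoped ENNReal

/-- Core estimate: weak (1,1) bound for the truncated maximal function, for a nonnegative
integrable density `g` with positive integral. -/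
theorem bowen_nevo_key {X : Type*} [MeasurableSpace X] [DecidableEq X]
    (μ : Measure X) [IsProbabilityMeasure μ]
    (R : X → X → Prop) (hR : Equivalence R)
    (F : ℕ → X → Finset X) (hFR : ∀ r x, ∀ y ∈ F r x, R x y)
    (hMT : ∀ G : X → X → ℝ, (∀ x y, ¬ R x y → G x y = 0) →
      ∫ x, ∑' y, G x y ∂μ = ∫ y, ∑' x, G x y ∂μ)
    (Creg : ℝ) (hCreg : 0 < Creg)
    (hreg : ∀ᵐ x ∂μ, ∀ r : ℕ,
      (({x' | ∃ t ≤ r, ((F t x') ∩ (F r x)).Nonempty}).ncard : ℝ) ≤ Creg * (F r x).card)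
    (g : X → ℝ) (hg0 : ∀ y, 0 ≤ g y) (hgint : Integrable g μ)
    (hgpos : 0 < ∫ x, g x ∂μ)
    (t : ℝ) (ht : 0 < t) (n : ℕ) :
    μ {x | ∃ r ≤ n, t * ((F r x).card : ℝ) < ∑ y ∈ F r x, g y} ≤
      ENNReal.ofReal (Creg * (∫ x, g x ∂μ) / t) := by
  classical
  set IG := ∫ x, g x ∂μ with hIGdef
  -- basic notions
  set P : X → ℕ → Prop := fun x r => t * ((F r x).card : ℝ) < ∑ y ∈ F r x, g y with hPdef
  set En : Set X := {x | ∃ r ≤ n, P x r} with hEndef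
  set ρ : X → ℕ := fun x => Nat.findGreatest (fun r => P x r) n with hρdef
  have hρle : ∀ x, ρ x ≤ n := fun x => Nat.findGreatest_le n
  have hρP : ∀ x ∈ En, P x (ρ x) := by
    rintro x ⟨r, hrn, hpr⟩
    exact Nat.findGreatest_spec hrn hpr
  have hFne : ∀ x ∈ En, (F (ρ x) x).Nonempty := by
    intro x hx
    rcases Finset.eq_empty_or_nonempty (F (ρ x) x) with h | h
    · exfalso
      have hp := hρP x hx
      rw [hPdef] at hp
      simp only [h, Finset.card_empty, Nat.cast_zero, mul_zero, Finset.sum_empty] at hp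
      exact lt_irrefl _ hp
    · exact h
  -- conflict relation
  set Cfl : X → X → Prop := fun z w => ((F (ρ z) z) ∩ (F (ρ w) w)).Nonempty with hCfldef
  have hCfl_symm : ∀ z w, Cfl z w → Cfl w z := by
    intro z w hc
    simp only [hCfldef] at hc ⊢
    obtain ⟨y, hy⟩ := hc
    rw [Finset.mem_inter] at hy
    exact ⟨y, Finset.mem_inter.2 ⟨hy.2, hy.1⟩⟩
  have hCflR : ∀ z w, Cfl z w → R z w := by
    intro z w hc
    simp only [hCfldef] at hc
    obtain ⟨y, hy⟩ := hc
    rw [Finset.mem_inter] at hy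
    exact hR.trans (hFR _ _ _ hy.1) (hR.symm (hFR _ _ _ hy.2))
  have hCfl_self : ∀ z ∈ En, Cfl z z := by
    intro z hz
    obtain ⟨y, hy⟩ := hFne z hz
    exact ⟨y, Finset.mem_inter.2 ⟨hy, hy⟩⟩
  -- Zorn selection, stage by stage
  have zorn : ∀ (A : Set X) (k : ℕ), ∃ M : Set X,
      Maximal (fun M : Set X => (∀ z ∈ M, z ∈ En ∧ ρ z = k) ∧
        (∀ z ∈ M, ∀ w ∈ M, z ≠ w → ¬ Cfl z w) ∧
        (∀ z ∈ M, ∀ w ∈ A, ¬ Cfl z w)) M := by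
    intro A k
    apply zorn_subset
    intro c hc hchain
    refine ⟨⋃₀ c, ⟨?_, ?_, ?_⟩, fun s hs => Set.subset_sUnion_of_mem hs⟩
    · rintro z ⟨s, hs, hzs⟩
      exact (hc hs).1 z hzs
    · rintro z ⟨s, hs, hzs⟩ w ⟨s', hs', hws'⟩ hzw
      rcases hchain.total hs hs' with h | h
      · exact (hc hs').2.1 z (h hzs) w hws' hzw
      · exact (hc hs).2.1 z hzs w (h hws') hzw
    · rintro z ⟨s, hs, hzs⟩ w hw
      exact (hc hs).2.2 z hzs w hw
  choose Next hNext using zorn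
  set U : ℕ → Set X := fun i =>
    Nat.rec (Next ∅ n) (fun i prev => prev ∪ Next prev (n - (i + 1))) i with hUdef
  have hU0 : U 0 = Next ∅ n := rfl
  have hUs : ∀ i, U (i + 1) = U i ∪ Next (U i) (n - (i + 1)) := fun i => rfl
  have hUmono : Monotone U := by
    apply monotone_nat_of_le_succ
    intro i
    rw [hUs i]
    exact Set.subset_union_left
  have hUmem : ∀ i, ∀ w ∈ U i, w ∈ En ∧ n - i ≤ ρ w ∧ ρ w ≤ n := by
    intro i
    induction i with
    | zero =>
      intro w hw
      have h := (hNext ∅ n).prop.1 w hw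
      exact ⟨h.1, by omega, by omega⟩
    | succ i ih =>
      intro w hw
      rw [hUs i] at hw
      rcases hw with hw | hw
      · have h := ih w hw
        exact ⟨h.1, by omega, h.2.2⟩
      · have h := (hNext (U i) (n - (i + 1))).prop.1 w hw
        exact ⟨h.1, by omega, by omega⟩
  have hUdisj : ∀ i, ∀ z ∈ U i, ∀ w ∈ U i, z ≠ w → ¬ Cfl z w := by
    intro i
    induction i with
    | zero => exact (hNext ∅ n).prop.2.1
    | succ i ih =>
      intro z hz w hw hzw
      rw [hUs i] at hz hw
      rcases hz with hz | hz <;> rcases hw with hw | hw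
      · exact ih z hz w hw hzw
      · intro hc
        exact (hNext (U i) (n - (i + 1))).prop.2.2 w hw z hz (hCfl_symm _ _ hc)
      · exact fun hc => (hNext (U i) (n - (i + 1))).prop.2.2 z hz w hw hc
      · exact (hNext (U i) (n - (i + 1))).prop.2.1 z hz w hw hzw
  -- stage lemma
  have hstage : ∀ (A : Set X) (k : ℕ), ∀ z ∈ En, ρ z = k →
      (∃ w ∈ Next A k, Cfl z w) ∨ (∃ w ∈ A, Cfl z w) := by
    intro A k z hz hzk
    by_cases hzM : z ∈ Next A k
    · exact Or.inl ⟨z, hzM, hCfl_self z hz⟩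
    · by_contra hno
      push_neg at hno
      obtain ⟨h1, h2⟩ := hno
      have hmax := hNext A k
      have hpred : (∀ a ∈ insert z (Next A k), a ∈ En ∧ ρ a = k) ∧
          (∀ a ∈ insert z (Next A k), ∀ b ∈ insert z (Next A k), a ≠ b → ¬ Cfl a b) ∧
          (∀ a ∈ insert z (Next A k), ∀ w ∈ A, ¬ Cfl a w) := by
        refine ⟨?_, ?_, ?_⟩
        · rintro a (rfl | ha)
          · exact ⟨hz, hzk⟩
          · exact hmax.prop.1 a ha
        · rintro a (rfl | ha) b (rfl | hb) hab
          · exact absurd rfl hab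
          · exact h1 b hb
          · exact fun hc => h1 a ha (hCfl_symm _ _ hc)
          · exact hmax.prop.2.1 a ha b hb hab
        · rintro a (rfl | ha) w hw
          · exact h2 w hw
          · exact hmax.prop.2.2 a ha w hw
      have hsub : insert z (Next A k) ⊆ Next A k :=
        hmax.2 hpred (Set.subset_insert _ _)
      exact hzM (hsub (Set.mem_insert _ _))
  -- covering property of S := U n
  set S : Set X := U n with hSdef
  have hSsub : ∀ w ∈ S, w ∈ En := fun w hw => (hUmem n w hw).1
  have hSdisj : ∀ z ∈ S, ∀ w ∈ S, z ≠ w → ¬ Cfl z w := hUdisj n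
  have hUcov : ∀ z ∈ En, ∃ w, w ∈ S ∧ ρ z ≤ ρ w ∧ Cfl z w := by
    intro z hz
    by_cases hk : ρ z = n
    · rcases hstage ∅ n z hz hk with ⟨w, hwM, hcw⟩ | ⟨w, hw, _⟩
      · have hwn : w ∈ S := hUmono (Nat.zero_le n) (hU0 ▸ hwM)
        have hρw : ρ w = n := ((hNext ∅ n).prop.1 w hwM).2
        exact ⟨w, hwn, by omega, hcw⟩
      · exact absurd hw (Set.notMem_empty w)
    · have hlt : ρ z < n := lt_of_le_of_ne (hρle z) hk
      set i := n - ρ z - 1 with hidef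
      have hi1 : n - (i + 1) = ρ z := by omega
      rcases hstage (U i) (ρ z) z hz rfl with ⟨w, hwM, hcw⟩ | ⟨w, hwU, hcw⟩
      · have hwmem : w ∈ U (i + 1) := by
          rw [hUs i, hi1]
          exact Or.inr hwM
        have hwn : w ∈ S := hUmono (by omega : i + 1 ≤ n) hwmem
        have hρw : ρ w = ρ z := ((hNext (U i) (ρ z)).prop.1 w hwM).2
        exact ⟨w, hwn, by omega, hcw⟩
      · have hwn : w ∈ S := hUmono (by omega : i ≤ n) hwU
        have h := (hUmem i w hwU).2.1
        exact ⟨w, hwn, by omega, hcw⟩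
  -- choice of a blocker for every point of En
  have hphiex : ∀ z : X, ∃ w : X,
      (z ∈ En ∧ w ∈ S ∧ ρ z ≤ ρ w ∧ Cfl z w) ∨ (z ∉ En ∧ w = z) := by
    intro z
    by_cases hz : z ∈ En
    · obtain ⟨w, h1, h2, h3⟩ := hUcov z hz
      exact ⟨w, Or.inl ⟨hz, h1, h2, h3⟩⟩
    · exact ⟨z, Or.inr ⟨hz, rfl⟩⟩
  choose phi hphi using hphiex
  have hphiS : ∀ z ∈ En, phi z ∈ S := by
    intro z hz
    rcases hphi z with ⟨_, h, _, _⟩ | ⟨h, _⟩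
    · exact h
    · exact absurd hz h
  have hphiself : ∀ z, z ∉ En → phi z = z := by
    intro z hz
    rcases hphi z with ⟨h, _, _, _⟩ | ⟨_, h⟩
    · exact absurd h hz
    · exact h
  -- the regularity sets
  set Dset : X → Set X := fun w => {x' | ∃ s ≤ ρ w, ((F s x') ∩ (F (ρ w) w)).Nonempty}
    with hDdef
  have hDw : ∀ w, Dset w = {x' | ∃ s ≤ ρ w, ((F s x') ∩ (F (ρ w) w)).Nonempty} := by
    intro w; simp only [hDdef]
  have hDmem : ∀ z w, ρ z ≤ ρ w → Cfl z w → z ∈ Dset w := by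
    intro z w h1 h2
    rw [hDw]
    exact ⟨ρ z, h1, h2⟩
  have hphiD : ∀ z ∈ En, z ∈ Dset (phi z) := by
    intro z hz
    rcases hphi z with ⟨_, _, h3, h4⟩ | ⟨h, _⟩
    · exact hDmem z (phi z) h3 h4
    · exact absurd hz h
  have hDR : ∀ z w, z ∈ Dset w → R z w := by
    intro z w hzw
    rw [hDw] at hzw
    obtain ⟨s, _, y, hy⟩ := hzw
    rw [Finset.mem_inter] at hy
    exact hR.trans (hFR _ _ _ hy.1) (hR.symm (hFR _ _ _ hy.2))
  -- choice of a unique-ish coverer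
  have hcovex : ∀ z : X, ∃ w : X,
      (w ∈ S ∧ z ∈ F (ρ w) w) ∨ ((¬ ∃ w' ∈ S, z ∈ F (ρ w') w') ∧ w = z) := by
    intro z
    by_cases hz : ∃ w' ∈ S, z ∈ F (ρ w') w'
    · obtain ⟨w, hw1, hw2⟩ := hz
      exact ⟨w, Or.inl ⟨hw1, hw2⟩⟩
    · exact ⟨z, Or.inr ⟨hz, rfl⟩⟩
  choose cov hcov using hcovex
  have hcov_uniq : ∀ z w, w ∈ S → z ∈ F (ρ w) w → cov z = w := by
    intro z w hwS hzF
    rcases hcov z with ⟨h1, h2⟩ | ⟨h1, _⟩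
    · by_contra hne
      exact hSdisj (cov z) h1 w hwS hne ⟨z, Finset.mem_inter.2 ⟨h2, hzF⟩⟩
    · exact absurd ⟨w, hwS, hzF⟩ h1
  -- sea sets
  set Mset : X → Set X := fun z => {w | w ∈ S ∧ (Dset w).Infinite ∧ z ∈ Dset w} with hMdef
  have hMw : ∀ z, Mset z = {w | w ∈ S ∧ (Dset w).Infinite ∧ z ∈ Dset w} := by
    intro z; simp only [hMdef]
  have hMfin : ∀ z, (Mset z).Finite := by
    intro z
    set Wz : Finset X := (Finset.range (n + 1)).biUnion (fun s => F s z) with hWdef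
    have hpick : ∀ w : X, ∃ y : X, w ∈ Mset z → (y ∈ Wz ∧ y ∈ F (ρ w) w) := by
      intro w
      by_cases hw : w ∈ Mset z
      · have hzD : z ∈ Dset w := ((hMw z) ▸ hw).2.2
        rw [hDw] at hzD
        obtain ⟨s, hs, y, hy⟩ := hzD
        rw [Finset.mem_inter] at hy
        refine ⟨y, fun _ => ⟨?_, hy.2⟩⟩
        refine Finset.mem_biUnion.2 ⟨s, Finset.mem_range.2 ?_, hy.1⟩
        have := hρle w
        omega
      · exact ⟨z, fun h => absurd h hw⟩
    choose pk hpk using hpick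
    apply Set.Finite.of_finite_image (f := pk)
    · apply Set.Finite.subset (Wz : Finset X).finite_toSet
      rintro y ⟨w, hw, rfl⟩
      exact (hpk w hw).1
    · intro a ha b hb hab
      by_contra hne
      have h1 := hpk a ha
      have h2 := hpk b hb
      have haS : a ∈ S := ((hMw z) ▸ ha).1
      have hbS : b ∈ S := ((hMw z) ▸ hb).1
      exact hSdisj a haS b hbS hne ⟨pk a, Finset.mem_inter.2 ⟨h1.2, hab ▸ h2.2⟩⟩
  set MC : X → ℝ := fun z => (((hMfin z).toFinset.card : ℕ) : ℝ) with hMCdef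
  have hMC0 : ∀ z, 0 ≤ MC z := by
    intro z; simp only [hMCdef]; exact Nat.cast_nonneg _
  -- transport kernels
  set A3 : X → X → ℝ := fun z w => if w = phi z then t else 0 with hA3def
  set C1 : X → X → ℝ := fun z w => if w ∈ Mset z then t else 0 with hC1def
  set C2 : X → X → ℝ := fun z w => if w = z then MC z * t else 0 with hC2def
  set G3 : X → X → ℝ := fun z w => A3 z w + (C1 z w - C2 z w) with hG3def
  set G2 : X → X → ℝ := fun z w => if w = cov z then Creg * g z else 0 with hG2def
  -- rows of G3
  have hsA3row : ∀ z, Summable (fun w => A3 z w) := by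
    intro z
    apply summable_of_ne_finset_zero (s := {phi z})
    intro w hw
    simp only [hA3def]
    rw [if_neg]
    intro h
    exact hw (by simp [h])
  have hA3row : ∀ z, ∑' w, A3 z w = t := by
    intro z
    simp only [hA3def]
    exact tsum_ite_eq (phi z) (fun _ => t)
  have hsC1row : ∀ z, Summable (fun w => C1 z w) := by
    intro z
    apply summable_of_ne_finset_zero (s := (hMfin z).toFinset)
    intro w hw
    simp only [hC1def]
    rw [if_neg]
    intro h
    exact hw ((hMfin z).mem_toFinset.2 h)
  have hC1row : ∀ z, ∑' w, C1 z w = MC z * t := by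
    intro z
    have h1 : ∑' w, C1 z w = ∑ w ∈ (hMfin z).toFinset, C1 z w := by
      apply tsum_eq_sum
      intro w hw
      simp only [hC1def]
      rw [if_neg]
      intro h
      exact hw ((hMfin z).mem_toFinset.2 h)
    rw [h1]
    have h2 : ∀ w ∈ (hMfin z).toFinset, C1 z w = t := by
      intro w hw
      simp only [hC1def]
      rw [if_pos ((hMfin z).mem_toFinset.1 hw)]
    rw [Finset.sum_congr rfl h2, Finset.sum_const, nsmul_eq_mul]
  have hsC2row : ∀ z, Summable (fun w => C2 z w) := by
    intro z
    apply summable_of_ne_finset_zero (s := {z})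
    intro w hw
    simp only [hC2def]
    rw [if_neg]
    intro h
    exact hw (by simp [h])
  have hC2row : ∀ z, ∑' w, C2 z w = MC z * t := by
    intro z
    simp only [hC2def]
    exact tsum_ite_eq z (fun _ => MC z * t)
  have hG3row : ∀ z, ∑' w, G3 z w = t := by
    intro z
    simp only [hG3def]
    rw [Summable.tsum_add (hsA3row z) ((hsC1row z).sub (hsC2row z)),
      Summable.tsum_sub (hsC1row z) (hsC2row z), hA3row z, hC1row z, hC2row z]
    ring
  have hG2row : ∀ z, ∑' w, G2 z w = Creg * g z := by
    intro z
    simp only [hG2def]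
    exact tsum_ite_eq (cov z) (fun _ => Creg * g z)
  -- support in R
  have hG3R : ∀ z w, ¬ R z w → G3 z w = 0 := by
    intro z w hnR
    have h1 : w ≠ phi z := by
      intro h
      subst h
      rcases hphi z with ⟨_, _, _, h4⟩ | ⟨_, h2⟩
      · exact hnR (hCflR _ _ h4)
      · exact hnR (by rw [h2]; exact hR.refl z)
    have h2 : w ∉ Mset z := by
      intro hm
      exact hnR (hDR z w ((hMw z ▸ hm).2.2))
    have h3 : w ≠ z := fun h => hnR (h ▸ hR.refl z)
    simp only [hG3def, hA3def, hC1def, hC2def, if_neg h1, if_neg h2, if_neg h3]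
    ring
  have hG2R : ∀ z w, ¬ R z w → G2 z w = 0 := by
    intro z w hnR
    have h1 : w ≠ cov z := by
      intro h
      subst h
      rcases hcov z with ⟨hc1, hc2⟩ | ⟨_, hc2⟩
      · exact hnR (hR.symm (hFR _ _ _ hc2))
      · exact hnR (by rw [hc2]; exact hR.refl z)
    simp only [hG2def, if_neg h1]
  -- mass transport: forced integrability of the columns
  set cols3 : X → ℝ := fun w => ∑' z, G3 z w with hcols3def
  set cols2 : X → ℝ := fun w => ∑' z, G2 z w with hcols2def
  have hMT3 := hMT G3 hG3R
  have hMT2 := hMT G2 hG2R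
  have hL3 : ∫ z, ∑' w, G3 z w ∂μ = t := by
    rw [show (fun z => ∑' w, G3 z w) = fun _ => t from funext hG3row]
    simp [integral_const]
  have hL2 : ∫ z, ∑' w, G2 z w ∂μ = Creg * IG := by
    rw [show (fun z => ∑' w, G2 z w) = fun z => Creg * g z from funext hG2row]
    rw [integral_const_mul, hIGdef]
  have hI3 : ∫ w, cols3 w ∂μ = t := by
    simp only [hcols3def]
    rw [← hMT3]
    exact hL3
  have hI2 : ∫ w, cols2 w ∂μ = Creg * IG := by
    simp only [hcols2def]
    rw [← hMT2]
    exact hL2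
  have hInt3 : Integrable cols3 μ := by
    by_contra hni
    rw [integral_undef hni] at hI3
    exact ht.ne hI3
  have hInt2 : Integrable cols2 μ := by
    by_contra hni
    rw [integral_undef hni] at hI2
    exact (mul_pos hCreg hgpos).ne hI2
  -- column estimates
  have hA3cases : ∀ w z, A3 z w ≠ 0 → (z ∈ En ∧ phi z = w ∧ z ∈ Dset w) ∨ (z ∉ En ∧ z = w) := by
    intro w z h
    have hw : w = phi z := by
      by_contra hne
      simp only [hA3def, if_neg hne] at h
      exact h rfl
    by_cases hz : z ∈ En
    · exact Or.inl ⟨hz, hw.symm, by rw [hw]; exact hphiD z hz⟩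
    · exact Or.inr ⟨hz, (hw.trans (hphiself z hz)).symm⟩
  have hscolC2 : ∀ w, Summable (fun z => C2 z w) := by
    intro w
    apply summable_of_ne_finset_zero (s := {w})
    intro z hz
    simp only [hC2def]
    rw [if_neg]
    intro h
    exact hz (Finset.mem_singleton.2 h.symm)
  have hcolC2 : ∀ w, ∑' z, C2 z w = MC w * t := by
    intro w
    rw [tsum_eq_single w]
    · simp only [hC2def, if_pos rfl]
    · intro z hz
      simp only [hC2def]
      rw [if_neg]
      exact fun h => hz h.symm
  have hcols3_notS : ∀ w, w ∉ S → cols3 w = (if w = phi w then t else 0) - MC w * t := by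
    intro w hwS
    have hA3z : ∀ z, z ≠ w → A3 z w = 0 := by
      intro z hzw
      by_contra h
      rcases hA3cases w z h with ⟨hzE, hphiz, _⟩ | ⟨_, hzw2⟩
      · exact hwS (hphiz ▸ hphiS z hzE)
      · exact hzw hzw2
    have hsA : Summable (fun z => A3 z w) := by
      apply summable_of_ne_finset_zero (s := {w})
      intro z hz
      exact hA3z z (by simpa using hz)
    have hC1zero : (fun z => C1 z w) = fun _ => (0 : ℝ) := by
      funext z
      simp only [hC1def]
      rw [if_neg]
      intro hm
      exact hwS ((hMw z ▸ hm).1)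
    have hsC1 : Summable (fun z => C1 z w) := by rw [hC1zero]; exact summable_zero
    have e1 : ∑' z, A3 z w = A3 w w := tsum_eq_single w hA3z
    have e2 : ∑' z, C1 z w = 0 := by rw [hC1zero]; exact tsum_zero
    simp only [hcols3def, hG3def]
    rw [Summable.tsum_add hsA (hsC1.sub (hscolC2 w)), Summable.tsum_sub hsC1 (hscolC2 w), e1, e2, hcolC2 w]
    simp only [hA3def]
    ring
  have hcols3_S_fin : ∀ w, w ∈ S → ∀ hDf : (Dset w).Finite,
      cols3 w ≤ ((Dset w).ncard : ℝ) * t := by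
    intro w hwS hDf
    have hA3z : ∀ z, z ∉ hDf.toFinset → A3 z w = 0 := by
      intro z hz
      by_contra h
      rcases hA3cases w z h with ⟨_, _, hD⟩ | ⟨hzE, hzw⟩
      · exact hz (hDf.mem_toFinset.2 hD)
      · exact hzE (by rw [hzw]; exact hSsub w hwS)
    have hsA : Summable (fun z => A3 z w) := summable_of_ne_finset_zero hA3z
    have hC1zero : (fun z => C1 z w) = fun _ => (0 : ℝ) := by
      funext z
      simp only [hC1def]
      rw [if_neg]
      intro hm
      exact ((hMw z ▸ hm).2.1) hDf
    have hsC1 : Summable (fun z => C1 z w) := by rw [hC1zero]; exact summable_zero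
    have e1 : ∑' z, A3 z w = ∑ z ∈ hDf.toFinset, A3 z w := tsum_eq_sum hA3z
    have e2 : ∑' z, C1 z w = 0 := by rw [hC1zero]; exact tsum_zero
    have hb : ∑ z ∈ hDf.toFinset, A3 z w ≤ (hDf.toFinset.card : ℝ) * t := by
      calc ∑ z ∈ hDf.toFinset, A3 z w ≤ ∑ _z ∈ hDf.toFinset, t := by
            apply Finset.sum_le_sum
            intro z _
            simp only [hA3def]
            split
            · exact le_rfl
            · exact ht.le
        _ = (hDf.toFinset.card : ℝ) * t := by rw [Finset.sum_const, nsmul_eq_mul]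
    have hcardeq : ((Dset w).ncard : ℝ) = (hDf.toFinset.card : ℝ) := by
      rw [Set.ncard_eq_toFinset_card (Dset w) hDf]
    simp only [hcols3def, hG3def]
    rw [Summable.tsum_add hsA (hsC1.sub (hscolC2 w)), Summable.tsum_sub hsC1 (hscolC2 w), e1, e2, hcolC2 w, hcardeq]
    have := mul_nonneg (hMC0 w) ht.le
    linarith
  have hcols3_S_inf : ∀ w, w ∈ S → (Dset w).Infinite → cols3 w = 0 := by
    intro w hwS hInf
    have hns : ¬ Summable (fun z => G3 z w) := by
      intro hs
      have hmem := hs.tendsto_cofinite_zero (Metric.ball_mem_nhds (0 : ℝ) ht)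
      have hfin : ((fun z => G3 z w) ⁻¹' Metric.ball 0 t)ᶜ.Finite := Filter.mem_cofinite.1 hmem
      apply hInf
      apply Set.Finite.subset (hfin.insert w)
      intro z hz
      by_cases hzw : z = w
      · exact Set.mem_insert_iff.2 (Or.inl hzw)
      · refine Set.mem_insert_iff.2 (Or.inr ?_)
        have hmemM : w ∈ Mset z := by rw [hMw]; exact ⟨hwS, hInf, hz⟩
        have hC1z : C1 z w = t := by simp only [hC1def, if_pos hmemM]
        have hC2z : C2 z w = 0 := by
          simp only [hC2def]
          rw [if_neg]
          exact fun h => hzw h.symm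
        have hA3z : 0 ≤ A3 z w := by
          simp only [hA3def]
          split
          · exact ht.le
          · exact le_rfl
        have hGe : t ≤ G3 z w := by
          simp only [hG3def]
          rw [hC1z, hC2z]
          linarith
        simp only [Set.mem_compl_iff, Set.mem_preimage, Metric.mem_ball, Real.dist_eq, sub_zero]
        exact not_lt.2 (le_trans hGe (le_abs_self _))
    simp only [hcols3def]
    exact tsum_eq_zero_of_not_summable hns
  -- cols2 estimates
  have hG2supp : ∀ w z, z ∉ insert w (F (ρ w) w) → G2 z w = 0 := by
    intro w z hz
    simp only [hG2def]
    rw [if_neg]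
    intro h
    rcases hcov z with ⟨_, h2⟩ | ⟨_, h2⟩
    · exact hz (Finset.mem_insert.2 (Or.inr (by rw [h]; exact h2)))
    · exact hz (Finset.mem_insert.2 (Or.inl (by rw [h, h2])))
  have hcols2eq : ∀ w, cols2 w = ∑ z ∈ insert w (F (ρ w) w), G2 z w := by
    intro w
    simp only [hcols2def]
    exact tsum_eq_sum (fun z hz => hG2supp w z hz)
  have hG2nonneg : ∀ z w, 0 ≤ G2 z w := by
    intro z w
    simp only [hG2def]
    split
    · exact mul_nonneg hCreg.le (hg0 z)
    · exact le_rfl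
  have hcols2_nonneg : ∀ w, 0 ≤ cols2 w := by
    intro w
    rw [hcols2eq w]
    exact Finset.sum_nonneg fun z _ => hG2nonneg z w
  have hcols2_ge : ∀ w ∈ S, Creg * ∑ y ∈ F (ρ w) w, g y ≤ cols2 w := by
    intro w hwS
    rw [hcols2eq w, Finset.mul_sum]
    have h1 : ∑ y ∈ F (ρ w) w, Creg * g y = ∑ y ∈ F (ρ w) w, G2 y w := by
      apply Finset.sum_congr rfl
      intro y hy
      simp only [hG2def]
      rw [if_pos (hcov_uniq y w hwS hy).symm]
    rw [h1]
    exact Finset.sum_le_sum_of_subset_of_nonneg (Finset.subset_insert _ _)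
      (fun z _ _ => hG2nonneg z w)
  -- the dominating function
  set θ : X → ℝ := fun w => cols2 w - cols3 w + t with hθdef
  have hsub23 : Integrable (fun w => cols2 w - cols3 w) μ := hInt2.sub hInt3
  have hIntθ : Integrable θ μ := by
    simp only [hθdef]
    exact hsub23.add (integrable_const t)
  have hIθ : ∫ w, θ w ∂μ = Creg * IG := by
    simp only [hθdef]
    rw [integral_add hsub23 (integrable_const t),
      integral_sub hInt2 hInt3, hI2, hI3, integral_const]
    simp
  have hpt : ∀ᵐ w ∂μ, 0 ≤ θ w ∧ (w ∈ En → t ≤ θ w) := by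
    filter_upwards [hreg] with w hw
    by_cases hwS : w ∈ S
    · have h32 : cols3 w ≤ cols2 w := by
        by_cases hInf : (Dset w).Infinite
        · rw [hcols3_S_inf w hwS hInf]
          exact hcols2_nonneg w
        · have hDf : (Dset w).Finite := Set.not_infinite.1 hInf
          have hb1 := hcols3_S_fin w hwS hDf
          have hregw : ((Dset w).ncard : ℝ) ≤ Creg * ((F (ρ w) w).card : ℝ) := by
            rw [hDw]
            exact hw (ρ w)
          have hPw : t * ((F (ρ w) w).card : ℝ) < ∑ y ∈ F (ρ w) w, g y := by
            have h := hρP w (hSsub w hwS)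
            rw [hPdef] at h
            exact h
          have hge := hcols2_ge w hwS
          calc cols3 w ≤ ((Dset w).ncard : ℝ) * t := hb1
            _ ≤ (Creg * ((F (ρ w) w).card : ℝ)) * t := by nlinarith
            _ = Creg * (t * ((F (ρ w) w).card : ℝ)) := by ring
            _ ≤ Creg * ∑ y ∈ F (ρ w) w, g y := by nlinarith
            _ ≤ cols2 w := hge
      constructor
      · simp only [hθdef]; linarith
      · intro _; simp only [hθdef]; linarith
    · have hc3 := hcols3_notS w hwS
      by_cases hwE : w ∈ En
      · have hphiw : w ≠ phi w := by
          intro h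
          apply hwS
          rw [h]
          exact hphiS w hwE
        have hc3' : cols3 w ≤ 0 := by
          rw [hc3, if_neg hphiw]
          have := mul_nonneg (hMC0 w) ht.le
          linarith
        have h0 := hcols2_nonneg w
        constructor
        · simp only [hθdef]; linarith
        · intro _; simp only [hθdef]; linarith
      · have hc3' : cols3 w ≤ t := by
          rw [hc3]
          have := mul_nonneg (hMC0 w) ht.le
          split <;> linarith
        have h0 := hcols2_nonneg w
        exact ⟨by simp only [hθdef]; linarith, fun h => absurd h hwE⟩
  -- Markov inequality
  have hθ0 : 0 ≤ᵐ[μ] θ := hpt.mono fun w h => h.1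
  have hEnle : μ En ≤ μ {w | t ≤ θ w} := by
    have hsub : En ⊆ {w | t ≤ θ w} ∪ {w | ¬ (0 ≤ θ w ∧ (w ∈ En → t ≤ θ w))} := by
      intro w hwEn
      by_cases hP : 0 ≤ θ w ∧ (w ∈ En → t ≤ θ w)
      · exact Or.inl (hP.2 hwEn)
      · exact Or.inr hP
    calc μ En ≤ μ ({w | t ≤ θ w} ∪ {w | ¬ (0 ≤ θ w ∧ (w ∈ En → t ≤ θ w))}) :=
          measure_mono hsub
      _ ≤ μ {w | t ≤ θ w} + μ {w | ¬ (0 ≤ θ w ∧ (w ∈ En → t ≤ θ w))} := measure_union_le _ _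
      _ = μ {w | t ≤ θ w} := by rw [ae_iff.1 hpt, add_zero]
  have hmark : ENNReal.ofReal t * μ {w | t ≤ θ w} ≤ ∫⁻ w, ENNReal.ofReal (θ w) ∂μ := by
    have hsub : {w | t ≤ θ w} ⊆ {w | ENNReal.ofReal t ≤ ENNReal.ofReal (θ w)} :=
      fun w h => ENNReal.ofReal_le_ofReal h
    calc ENNReal.ofReal t * μ {w | t ≤ θ w}
        ≤ ENNReal.ofReal t * μ {w | ENNReal.ofReal t ≤ ENNReal.ofReal (θ w)} :=
          mul_le_mul_right (measure_mono hsub) _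
      _ ≤ ∫⁻ w, ENNReal.ofReal (θ w) ∂μ :=
          mul_meas_ge_le_lintegral₀ (ENNReal.measurable_ofReal.comp_aemeasurable
            hIntθ.aestronglyMeasurable.aemeasurable) _
  have hlint : ∫⁻ w, ENNReal.ofReal (θ w) ∂μ = ENNReal.ofReal (Creg * IG) := by
    rw [← ofReal_integral_eq_lintegral_ofReal hIntθ hθ0, hIθ]
  have hfinal : μ En ≤ ENNReal.ofReal (Creg * IG) / ENNReal.ofReal t := by
    rw [ENNReal.le_div_iff_mul_le (Or.inl (ENNReal.ofReal_pos.2 ht).ne')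
      (Or.inl ENNReal.ofReal_ne_top)]
    calc μ En * ENNReal.ofReal t = ENNReal.ofReal t * μ En := mul_comm _ _
      _ ≤ ENNReal.ofReal t * μ {w | t ≤ θ w} := mul_le_mul_right hEnle _
      _ ≤ ∫⁻ w, ENNReal.ofReal (θ w) ∂μ := hmark
      _ = ENNReal.ofReal (Creg * IG) := hlint
  rw [ENNReal.ofReal_div_of_pos ht]
  exact hfinal




theorem weak_11_regular {X : Type*} [MeasurableSpace X] [DecidableEq X]
    (μ : Measure X) [IsProbabilityMeasure μ]
    (R : X → X → Prop) (hR : Equivalence R) (hcount : ∀ x, {y | R x y}.Countable)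
    (F : ℕ → X → Finset X) (hFR : ∀ r x, ∀ y ∈ F r x, R x y)
    (hBorel : MeasurableSet {p : (X × X) × ℕ | p.1.2 ∈ F p.2 p.1.1})
    (hMT : ∀ G : X → X → ℝ, (∀ x y, ¬ R x y → G x y = 0) →
      ∫ x, ∑' y, G x y ∂μ = ∫ y, ∑' x, G x y ∂μ)
    (Creg : ℝ) (hCreg : 0 < Creg)
    (hreg : ∀ᵐ x ∂μ, ∀ r : ℕ,
      (({x' | ∃ t ≤ r, ((F t x') ∩ (F r x)).Nonempty}).ncard : ℝ) ≤ Creg * (F r x).card)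
    (f : X → ℝ) (hfint : Integrable f μ) (t : ℝ) (ht : 0 < t) :
    μ {x | ENNReal.ofReal t <
        ⨆ r : ℕ, (∑ y ∈ F r x, ENNReal.ofReal |f y|) / ((F r x).card : ℝ≥0∞)} ≤
      ENNReal.ofReal (Creg * (∫ x, |f x| ∂μ) / t) := by
  classical
  set I := ∫ x, |f x| ∂μ with hIdef
  have hI0 : 0 ≤ I := integral_nonneg fun x => abs_nonneg _
  have key : ∀ ε : ℝ, 0 < ε → ∀ n : ℕ,
      μ {x | ∃ r ≤ n, t * ((F r x).card : ℝ) < ∑ y ∈ F r x, (|f y| + ε)} ≤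
        ENNReal.ofReal (Creg * (I + ε) / t) := by
    intro ε hε n
    have hg0 : ∀ y, 0 ≤ |f y| + ε := fun y => by positivity
    have hgint : Integrable (fun y => |f y| + ε) μ := hfint.abs.add (integrable_const ε)
    have hgI : ∫ x, (|f x| + ε) ∂μ = I + ε := by
      rw [integral_add hfint.abs (integrable_const ε), integral_const]
      simp [hIdef]
    have hgpos : 0 < ∫ x, (|f x| + ε) ∂μ := by
      rw [hgI]; linarith
    have h := bowen_nevo_key μ R hR F hFR hMT Creg hCreg hreg
      (fun y => |f y| + ε) hg0 hgint hgpos t ht n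
    rwa [hgI] at h
  have hsubset : ∀ ε : ℝ, 0 < ε →
      {x | ENNReal.ofReal t <
        ⨆ r : ℕ, (∑ y ∈ F r x, ENNReal.ofReal |f y|) / ((F r x).card : ℝ≥0∞)} ⊆
      ⋃ n : ℕ, {x | ∃ r ≤ n, t * ((F r x).card : ℝ) < ∑ y ∈ F r x, (|f y| + ε)} := by
    intro ε hε x hx
    rw [Set.mem_setOf_eq, lt_iSup_iff] at hx
    obtain ⟨r, hr⟩ := hx
    have hone : (F r x).Nonempty := by
      by_contra hne
      rw [Finset.not_nonempty_iff_eq_empty] at hne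
      rw [hne] at hr
      simp at hr
    have hcard0 : ((F r x).card : ℝ≥0∞) ≠ 0 :=
      Nat.cast_ne_zero.2 (fun h => hone.ne_empty (Finset.card_eq_zero.1 h))
    have hr2 : ENNReal.ofReal t * ((F r x).card : ℝ≥0∞) < ∑ y ∈ F r x, ENNReal.ofReal |f y| :=
      (ENNReal.lt_div_iff_mul_lt (Or.inl hcard0) (Or.inl (ENNReal.natCast_ne_top _))).1 hr
    have hsum : (∑ y ∈ F r x, ENNReal.ofReal |f y|) = ENNReal.ofReal (∑ y ∈ F r x, |f y|) :=
      (ENNReal.ofReal_sum_of_nonneg (fun i _ => abs_nonneg _)).symm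
    have hmul : ENNReal.ofReal t * ((F r x).card : ℝ≥0∞)
        = ENNReal.ofReal (t * ((F r x).card : ℝ)) := by
      rw [ENNReal.ofReal_mul ht.le, ENNReal.ofReal_natCast]
    rw [hsum, hmul] at hr2
    have hlt : t * ((F r x).card : ℝ) < ∑ y ∈ F r x, |f y| :=
      (ENNReal.ofReal_lt_ofReal_iff_of_nonneg (by positivity)).1 hr2
    refine Set.mem_iUnion.2 ⟨r, r, le_refl r, ?_⟩
    calc t * ((F r x).card : ℝ) < ∑ y ∈ F r x, |f y| := hlt
      _ ≤ ∑ y ∈ F r x, (|f y| + ε) := Finset.sum_le_sum fun i _ => by linarith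
  have hmono : ∀ ε : ℝ, Monotone (fun n : ℕ =>
      {x | ∃ r ≤ n, t * ((F r x).card : ℝ) < ∑ y ∈ F r x, (|f y| + ε)}) := by
    intro ε a b hab x hx
    obtain ⟨r, hr, h⟩ := hx
    exact ⟨r, hr.trans hab, h⟩
  have hbound : ∀ ε : ℝ, 0 < ε →
      μ {x | ENNReal.ofReal t <
        ⨆ r : ℕ, (∑ y ∈ F r x, ENNReal.ofReal |f y|) / ((F r x).card : ℝ≥0∞)} ≤
        ENNReal.ofReal (Creg * (I + ε) / t) := by
    intro ε hε
    calc μ {x | ENNReal.ofReal t <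
        ⨆ r : ℕ, (∑ y ∈ F r x, ENNReal.ofReal |f y|) / ((F r x).card : ℝ≥0∞)}
        ≤ μ (⋃ n : ℕ, {x | ∃ r ≤ n, t * ((F r x).card : ℝ) < ∑ y ∈ F r x, (|f y| + ε)}) :=
          measure_mono (hsubset ε hε)
      _ = ⨆ n : ℕ, μ {x | ∃ r ≤ n, t * ((F r x).card : ℝ) < ∑ y ∈ F r x, (|f y| + ε)} :=
          (hmono ε).measure_iUnion
      _ ≤ ENNReal.ofReal (Creg * (I + ε) / t) := iSup_le fun n => key ε hε n
  have hlim : Filter.Tendsto (fun k : ℕ => ENNReal.ofReal (Creg * (I + 1 / ((k : ℝ) + 1)) / t))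
      Filter.atTop (nhds (ENNReal.ofReal (Creg * I / t))) := by
    apply ENNReal.tendsto_ofReal
    have h1 : Filter.Tendsto (fun k : ℕ => 1 / ((k : ℝ) + 1)) Filter.atTop (nhds 0) :=
      tendsto_one_div_add_atTop_nhds_zero_nat
    have h2 : Filter.Tendsto (fun k : ℕ => I + 1 / ((k : ℝ) + 1)) Filter.atTop (nhds (I + 0)) :=
      tendsto_const_nhds.add h1
    rw [add_zero] at h2
    exact (h2.const_mul Creg).div_const t
  refine ge_of_tendsto hlim ?_
  refine Filter.Eventually.of_forall fun k => ?_
  exact hbound (1 / ((k : ℝ) + 1)) (by positivity)
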